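/- Fix positive integers n, λ_0, …, λ_N and a prime power q with gcd(q, λ_i) = 1 for all i. The weighted point count over F_q of the Hom stack Hom_n(P^1, P(λ)) (parameterizing tuples of degree n·λ_i homogeneous polynomials without common zero, modulo the weighted G_m-scaling) equals (1 + q + … + q^N)·(q^{|λ|n} − q^{|λ|n − N}), where |λ| = Σλ_i. -/
import Mathlib

open Polynomial

/-- Evaluation at `(x, y)` of the homogeneous polynomial of degree `d` (or zero) over a
field `F` with coefficient vector `u`, in the algebraic closure of `F`. -/
noncomputable def homEval {F : Type*} [Field F] {d : ℕ} (u : Fin (d + 1) → F)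
    (x y : AlgebraicClosure F) : AlgebraicClosure F :=
  ∑ j : Fin (d + 1), algebraMap F (AlgebraicClosure F) (u j) * x ^ (j : ℕ) * y ^ (d - (j : ℕ))

namespace Stmt12Aux

variable {F : Type*} [Field F]

noncomputable def polyOf {e : ℕ} (u : Fin e → F) : F[X] :=
  ∑ j : Fin e, C (u j) * X ^ (j : ℕ)

lemma coeff_polyOf {e : ℕ} (u : Fin e → F) (k : ℕ) :
    (polyOf u).coeff k = if h : k < e then u ⟨k, h⟩ else 0 := by
  classical
  rw [polyOf, finset_sum_coeff]
  simp only [coeff_C_mul, coeff_X_pow]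
  split
  · next h =>
    rw [Finset.sum_eq_single (⟨k, h⟩ : Fin e)]
    · simp
    · intro b _ hb
      have : k ≠ (b : ℕ) := by
        intro hh; exact hb (Fin.ext hh.symm)
      simp [this]
    · intro h'; exact absurd (Finset.mem_univ _) h'
  · next h =>
    apply Finset.sum_eq_zero
    intro j _
    have : k ≠ (j : ℕ) := by have := j.isLt; omega
    simp [this]

lemma polyOf_mem_degreeLT {e : ℕ} (u : Fin e → F) : polyOf u ∈ degreeLT F e := by
  rw [mem_degreeLT, polyOf]
  apply lt_of_le_of_lt (degree_sum_le _ _)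
  rw [Finset.sup_lt_iff (by exact WithBot.bot_lt_coe e)]
  intro j _
  exact lt_of_le_of_lt (degree_C_mul_X_pow_le _ _) (by exact_mod_cast j.isLt)

lemma polyOf_coeffFn {e : ℕ} {p : F[X]} (hp : p ∈ degreeLT F e) :
    polyOf (fun j : Fin e => p.coeff j) = p := by
  ext k
  rw [coeff_polyOf]
  split
  · rfl
  · next h =>
    symm
    exact coeff_eq_zero_of_degree_lt
      (lt_of_lt_of_le (mem_degreeLT.mp hp) (by exact_mod_cast by omega))

noncomputable def vecEquiv (e : ℕ) : (Fin e → F) ≃ degreeLT F e where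
  toFun u := ⟨polyOf u, polyOf_mem_degreeLT u⟩
  invFun p := fun j => (p : F[X]).coeff j
  left_inv u := by
    funext j
    show (polyOf u).coeff j = u j
    rw [coeff_polyOf]
    simp [j.isLt]
  right_inv p := Subtype.ext (polyOf_coeffFn p.2)

lemma monic_divX {g : F[X]} (hg : g.Monic) (h1 : 0 < g.natDegree) :
    g.divX.Monic ∧ g.divX.natDegree = g.natDegree - 1 := by
  have hne : g.divX ≠ 0 := by
    intro h0
    have h2 := divX_mul_X_add g
    rw [h0, zero_mul, zero_add] at h2
    rw [← h2] at h1
    simp at h1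
  have hdeg : g.divX.natDegree = g.natDegree - 1 := by
    have h2 := divX_mul_X_add g
    have h3 : (g.divX * X).natDegree = g.divX.natDegree + 1 := by
      rw [natDegree_mul hne X_ne_zero, natDegree_X]
    have h4 : g.natDegree = g.divX.natDegree + 1 := by
      conv_lhs => rw [← h2]
      rw [natDegree_add_C, h3]
    omega
  refine ⟨?_, hdeg⟩
  have h5 : g.divX.coeff (g.divX.natDegree) = 1 := by
    rw [hdeg, coeff_divX]
    have h6 : g.natDegree - 1 + 1 = g.natDegree := by omega
    rw [h6, coeff_natDegree]
    exact hg
  rwa [Monic, Polynomial.leadingCoeff]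

lemma divX_mul_X' (p : F[X]) : (p * X).divX = p := by
  ext n; rw [coeff_divX, coeff_mul_X]

lemma mul_div_cancel_left' {g : F[X]} (p : F[X]) (hg : g ≠ 0) : g * p / g = p := by
  rw [mul_comm]; exact mul_div_cancel_right₀ p hg

section GCD
variable [DecidableEq F]

lemma gcd_monic_of_ne {ι : Type*} [Fintype ι] {f : ι → F[X]}
    (hne : Finset.gcd Finset.univ f ≠ 0) : (Finset.gcd Finset.univ f).Monic := by
  have h1 : normalize (Finset.gcd Finset.univ f) = Finset.gcd Finset.univ f :=
    Finset.normalize_gcd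
  have := monic_normalize (p := Finset.gcd Finset.univ f) hne
  rwa [h1] at this

lemma gcd_natDegree_pos {ι : Type*} [Fintype ι] {f : ι → F[X]}
    (hne : Finset.gcd Finset.univ f ≠ 0)
    (hnu : ¬ IsUnit (Finset.gcd Finset.univ f)) :
    0 < (Finset.gcd Finset.univ f).natDegree := by
  rcases Nat.eq_zero_or_pos (Finset.gcd Finset.univ f).natDegree with h | h
  · exfalso
    apply hnu
    rw [isUnit_iff_degree_eq_zero, degree_eq_natDegree hne, h]
    rfl
  · exact h

lemma gcd_div_gcd_eq_one {ι : Type*} [Fintype ι] (f : ι → F[X])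
    (hne : Finset.gcd Finset.univ f ≠ 0) :
    Finset.gcd Finset.univ (fun i => f i / Finset.gcd Finset.univ f) = 1 := by
  set g := Finset.gcd Finset.univ f with hgdef
  have hdvd : ∀ i, g ∣ f i := fun i => Finset.gcd_dvd (Finset.mem_univ i)
  have h1 : (fun i => g * (f i / g)) = f :=
    funext fun i => EuclideanDomain.mul_div_cancel' hne (hdvd i)
  have h2 : Finset.gcd Finset.univ (fun i => g * (f i / g))
      = normalize g * Finset.gcd Finset.univ (fun i => f i / g) := Finset.gcd_mul_left
  rw [h1, Finset.normalize_gcd] at h2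
  exact (mul_left_cancel₀ hne (by rw [mul_one, ← h2])).symm

lemma gcd_mul_tuple {ι : Type*} [Fintype ι] {g : F[X]} (hg : g.Monic) (r : ι → F[X]) :
    Finset.gcd Finset.univ (fun i => g * r i) = g * Finset.gcd Finset.univ r := by
  rw [Finset.gcd_mul_left, hg.normalize_eq_self]

end GCD

section Equiv
variable [DecidableEq F]

lemma mem_forward {e : ℕ} {g p : F[X]} (hg : g.Monic) (hk : 0 < g.natDegree)
    (hdvd : g ∣ p) (hp : p ∈ degreeLT F e) : g.divX * (p / g) ∈ degreeLT F (e - 1) := by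
  rcases eq_or_ne p 0 with h0 | h0
  · rw [h0, EuclideanDomain.zero_div, mul_zero]
    exact Submodule.zero_mem _
  · set r := p / g with hrdef
    have hgr : g * r = p := EuclideanDomain.mul_div_cancel' hg.ne_zero hdvd
    have hrne : r ≠ 0 := by intro h; rw [h, mul_zero] at hgr; exact h0 hgr.symm
    obtain ⟨hdm, hdd⟩ := monic_divX hg hk
    rw [mem_degreeLT] at hp ⊢
    rw [← natDegree_lt_iff_degree_lt h0] at hp
    have hne2 : g.divX * r ≠ 0 := mul_ne_zero hdm.ne_zero hrne
    rw [← natDegree_lt_iff_degree_lt hne2, natDegree_mul hdm.ne_zero hrne, hdd]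
    have h3 : g.natDegree + r.natDegree = p.natDegree := by
      rw [← hgr, natDegree_mul hg.ne_zero hrne]
    omega

lemma monic_reassemble {g' : F[X]} (a : F) (hg' : g'.Monic) : (g' * X + C a).Monic := by
  apply (hg'.mul monic_X).add_of_left
  apply lt_of_lt_of_le degree_C_lt
  rw [degree_mul, degree_X, degree_eq_natDegree hg'.ne_zero]
  exact_mod_cast Nat.succ_le_succ (Nat.zero_le _)

lemma natDegree_reassemble {g' : F[X]} (a : F) (hg' : g'.Monic) :
    (g' * X + C a).natDegree = g'.natDegree + 1 := by
  rw [natDegree_add_C, natDegree_mul hg'.ne_zero X_ne_zero, natDegree_X]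

lemma mem_backward {e : ℕ} {g' s : F[X]} (a : F) (hg' : g'.Monic)
    (hdvd : g' ∣ s) (hs : s ∈ degreeLT F (e - 1)) (he : 1 ≤ e) :
    (g' * X + C a) * (s / g') ∈ degreeLT F e := by
  rcases eq_or_ne s 0 with h0 | h0
  · rw [h0, EuclideanDomain.zero_div, mul_zero]
    exact Submodule.zero_mem _
  · set r := s / g' with hrdef
    have hgr : g' * r = s := EuclideanDomain.mul_div_cancel' hg'.ne_zero hdvd
    have hrne : r ≠ 0 := by intro h; rw [h, mul_zero] at hgr; exact h0 hgr.symm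
    have hgm := monic_reassemble a hg'
    have hgd := natDegree_reassemble a hg'
    rw [mem_degreeLT] at hs ⊢
    rw [← natDegree_lt_iff_degree_lt h0] at hs
    have hne2 : (g' * X + C a) * r ≠ 0 := mul_ne_zero hgm.ne_zero hrne
    rw [← natDegree_lt_iff_degree_lt hne2, natDegree_mul hgm.ne_zero hrne, hgd]
    have h3 : g'.natDegree + r.natDegree = s.natDegree := by
      rw [← hgr, natDegree_mul hg'.ne_zero hrne]
    omega


lemma psi_phi_val {ι : Type*} [Fintype ι] (f : ι → F[X])
    (hne : Finset.gcd Finset.univ f ≠ 0) (hnu : ¬ IsUnit (Finset.gcd Finset.univ f)) (i : ι) :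
    ((Finset.gcd Finset.univ fun j =>
        (Finset.gcd Finset.univ f).divX * (f j / Finset.gcd Finset.univ f)) * X
      + C ((Finset.gcd Finset.univ f).coeff 0)) *
      ((Finset.gcd Finset.univ f).divX * (f i / Finset.gcd Finset.univ f) /
        (Finset.gcd Finset.univ fun j =>
          (Finset.gcd Finset.univ f).divX * (f j / Finset.gcd Finset.univ f)))
    = f i := by
  have hdm := monic_divX (gcd_monic_of_ne hne) (gcd_natDegree_pos hne hnu)
  have hG' : (Finset.gcd Finset.univ fun j =>
      (Finset.gcd Finset.univ f).divX * (f j / Finset.gcd Finset.univ f))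
      = (Finset.gcd Finset.univ f).divX := by
    rw [gcd_mul_tuple hdm.1, gcd_div_gcd_eq_one f hne, mul_one]
  rw [hG', divX_mul_X_add, mul_div_cancel_left' _ hdm.1.ne_zero]
  exact EuclideanDomain.mul_div_cancel' hne (Finset.gcd_dvd (Finset.mem_univ i))

lemma phi_psi_gcd {ι : Type*} [Fintype ι] (s : ι → F[X])
    (hne : Finset.gcd Finset.univ s ≠ 0) (a : F) :
    (Finset.gcd Finset.univ fun i =>
        ((Finset.gcd Finset.univ s) * X + C a) * (s i / Finset.gcd Finset.univ s))
      = (Finset.gcd Finset.univ s) * X + C a := by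
  rw [gcd_mul_tuple (monic_reassemble a (gcd_monic_of_ne hne)),
    gcd_div_gcd_eq_one s hne, mul_one]

lemma phi_psi_val1 {ι : Type*} [Fintype ι] (s : ι → F[X])
    (hne : Finset.gcd Finset.univ s ≠ 0) (a : F) :
    (Finset.gcd Finset.univ fun i =>
        ((Finset.gcd Finset.univ s) * X + C a) * (s i / Finset.gcd Finset.univ s)).coeff 0
      = a := by
  rw [phi_psi_gcd s hne a]
  simp [coeff_mul_X_zero]

lemma phi_psi_val2 {ι : Type*} [Fintype ι] (s : ι → F[X])
    (hne : Finset.gcd Finset.univ s ≠ 0) (a : F) (i : ι) :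
    (Finset.gcd Finset.univ fun j =>
        ((Finset.gcd Finset.univ s) * X + C a) * (s j / Finset.gcd Finset.univ s)).divX *
      ((((Finset.gcd Finset.univ s) * X + C a) * (s i / Finset.gcd Finset.univ s)) /
        (Finset.gcd Finset.univ fun j =>
          ((Finset.gcd Finset.univ s) * X + C a) * (s j / Finset.gcd Finset.univ s)))
    = s i := by
  have hgm := monic_reassemble a (gcd_monic_of_ne hne)
  rw [phi_psi_gcd s hne a, mul_div_cancel_left' _ hgm.ne_zero]
  have hdivX : ((Finset.gcd Finset.univ s) * X + C a).divX = Finset.gcd Finset.univ s := by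
    rw [divX_add, divX_mul_X', divX_C, add_zero]
  rw [hdivX]
  exact EuclideanDomain.mul_div_cancel' hne (Finset.gcd_dvd (Finset.mem_univ i))

variable {m : ℕ} (e : Fin (m + 1) → ℕ)

noncomputable def badEquiv (he : ∀ i, 1 ≤ e i) :
    {p : Π i, degreeLT F (e i) // (∃ i, ((p i : F[X])) ≠ 0) ∧
        ¬ IsUnit (Finset.gcd Finset.univ fun i => ((p i : F[X])))} ≃
    F × {s : Π i, degreeLT F (e i - 1) // ∃ i, ((s i : F[X])) ≠ 0} where
  toFun P := by
    refine ⟨(Finset.gcd Finset.univ fun i => ((P.1 i : F[X]))).coeff 0,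
      ⟨fun i => ⟨(Finset.gcd Finset.univ fun i => ((P.1 i : F[X]))).divX *
        ((P.1 i : F[X]) / (Finset.gcd Finset.univ fun i => ((P.1 i : F[X])))), ?_⟩, ?_⟩⟩
    · set g := Finset.gcd Finset.univ fun i => ((P.1 i : F[X])) with hgdef
      have hgne : g ≠ 0 := by
        intro h
        obtain ⟨i, hi⟩ := P.2.1
        exact hi (Finset.gcd_eq_zero_iff.mp h i (Finset.mem_univ i))
      exact mem_forward (gcd_monic_of_ne hgne) (gcd_natDegree_pos hgne P.2.2)
        (Finset.gcd_dvd (Finset.mem_univ i)) (P.1 i).2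
    · set g := Finset.gcd Finset.univ fun i => ((P.1 i : F[X])) with hgdef
      have hgne : g ≠ 0 := by
        intro h
        obtain ⟨i, hi⟩ := P.2.1
        exact hi (Finset.gcd_eq_zero_iff.mp h i (Finset.mem_univ i))
      obtain ⟨i, hi⟩ := P.2.1
      refine ⟨i, ?_⟩
      have hd := monic_divX (gcd_monic_of_ne hgne) (gcd_natDegree_pos hgne P.2.2)
      apply mul_ne_zero hd.1.ne_zero
      intro h
      apply hi
      have h2 : (Finset.gcd Finset.univ fun i => ((P.1 i : F[X]))) *
          ((P.1 i : F[X]) / (Finset.gcd Finset.univ fun i => ((P.1 i : F[X])))) = (P.1 i : F[X]) :=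
        EuclideanDomain.mul_div_cancel' hgne (Finset.gcd_dvd (Finset.mem_univ i))
      rw [← h2, h, mul_zero]
  invFun S := by
    refine ⟨fun i => ⟨((Finset.gcd Finset.univ fun i => ((S.2.1 i : F[X]))) * X + C S.1) *
        ((S.2.1 i : F[X]) / (Finset.gcd Finset.univ fun i => ((S.2.1 i : F[X])))), ?_⟩, ?_, ?_⟩
    · set g' := Finset.gcd Finset.univ fun i => ((S.2.1 i : F[X])) with hgdef
      have hgne : g' ≠ 0 := by
        intro h
        obtain ⟨i, hi⟩ := S.2.2
        exact hi (Finset.gcd_eq_zero_iff.mp h i (Finset.mem_univ i))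
      exact mem_backward S.1 (gcd_monic_of_ne hgne)
        (Finset.gcd_dvd (Finset.mem_univ i)) (S.2.1 i).2 (he i)
    · set g' := Finset.gcd Finset.univ fun i => ((S.2.1 i : F[X])) with hgdef
      have hgne : g' ≠ 0 := by
        intro h
        obtain ⟨i, hi⟩ := S.2.2
        exact hi (Finset.gcd_eq_zero_iff.mp h i (Finset.mem_univ i))
      obtain ⟨i, hi⟩ := S.2.2
      refine ⟨i, mul_ne_zero (monic_reassemble S.1 (gcd_monic_of_ne hgne)).ne_zero ?_⟩
      intro h
      apply hi
      have h2 : (Finset.gcd Finset.univ fun i => ((S.2.1 i : F[X]))) *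
          ((S.2.1 i : F[X]) / (Finset.gcd Finset.univ fun i => ((S.2.1 i : F[X])))) = (S.2.1 i : F[X]) :=
        EuclideanDomain.mul_div_cancel' hgne (Finset.gcd_dvd (Finset.mem_univ i))
      rw [← h2, h, mul_zero]
    · set g' := Finset.gcd Finset.univ fun i => ((S.2.1 i : F[X])) with hgdef
      have hgne : g' ≠ 0 := by
        intro h
        obtain ⟨i, hi⟩ := S.2.2
        exact hi (Finset.gcd_eq_zero_iff.mp h i (Finset.mem_univ i))
      have hgm' := gcd_monic_of_ne hgne
      have hgm := monic_reassemble S.1 hgm'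
      have hquot : Finset.gcd Finset.univ (fun i => (S.2.1 i : F[X]) / g') = 1 :=
        gcd_div_gcd_eq_one _ hgne
      have hgcd : (Finset.gcd Finset.univ fun i =>
          ((g' * X + C S.1) * ((S.2.1 i : F[X]) / g'))) = g' * X + C S.1 := by
        rw [gcd_mul_tuple hgm, hquot, mul_one]
      intro hu
      rw [hgcd] at hu
      rw [isUnit_iff_degree_eq_zero, degree_eq_natDegree hgm.ne_zero,
        natDegree_reassemble S.1 hgm'] at hu
      have : (Finset.gcd Finset.univ fun i => ((S.2.1 i : F[X]))).natDegree + 1 = 0 := by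
        exact_mod_cast hu
      omega
  left_inv := by
    intro P
    have hne : (Finset.gcd Finset.univ fun i => ((P.1 i : F[X]))) ≠ 0 := by
      intro h
      obtain ⟨i, hi⟩ := P.2.1
      exact hi (Finset.gcd_eq_zero_iff.mp h i (Finset.mem_univ i))
    exact Subtype.ext (funext fun i => Subtype.ext
      (psi_phi_val (fun i => ((P.1 i : F[X]))) hne P.2.2 i))
  right_inv := by
    intro S
    have hne : (Finset.gcd Finset.univ fun i => ((S.2.1 i : F[X]))) ≠ 0 := by
      intro h
      obtain ⟨i, hi⟩ := S.2.2
      exact hi (Finset.gcd_eq_zero_iff.mp h i (Finset.mem_univ i))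
    exact Prod.ext (phi_psi_val1 (fun i => ((S.2.1 i : F[X]))) hne S.1)
      (Subtype.ext (funext fun i => Subtype.ext
        (phi_psi_val2 (fun i => ((S.2.1 i : F[X]))) hne S.1 i)))

end Equiv

section Count
variable [Fintype F] [DecidableEq F]

noncomputable instance (e : ℕ) : Finite (degreeLT F e) :=
  Finite.of_equiv _ (vecEquiv (F := F) e)

lemma card_degreeLT (e : ℕ) : Nat.card (degreeLT F e) = Fintype.card F ^ e := by
  calc Nat.card (degreeLT F e) = Nat.card (Fin e → F) :=
        Nat.card_congr (vecEquiv (F := F) e).symm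
    _ = Fintype.card F ^ e := by
        rw [Nat.card_fun, Nat.card_eq_fintype_card, Nat.card_eq_fintype_card, Fintype.card_fin]

lemma card_split {α : Type*} [Finite α] (P : α → Prop) :
    Nat.card α = Nat.card {a // P a} + Nat.card {a // ¬ P a} := by
  classical
  calc Nat.card α = Nat.card ({a // P a} ⊕ {a // ¬ P a}) :=
        (Nat.card_congr (Equiv.sumCompl P)).symm
    _ = _ := Nat.card_sum

lemma card_split2 {α : Type*} [Finite α] (P Q : α → Prop) :
    Nat.card {a // P a} = Nat.card {a // P a ∧ Q a} + Nat.card {a // P a ∧ ¬ Q a} := by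
  classical
  rw [card_split (fun (x : {a // P a}) => Q x.1),
    Nat.card_congr (Equiv.subtypeSubtypeEquivSubtypeInter P Q),
    Nat.card_congr (Equiv.subtypeSubtypeEquivSubtypeInter P (fun a => ¬ Q a))]

lemma card_zero_tuple {m : ℕ} (e : Fin (m + 1) → ℕ) :
    Nat.card {p : Π i, degreeLT F (e i) // ∀ i, (p i : F[X]) = 0} = 1 := by
  rw [Nat.card_eq_one_iff_unique]
  constructor
  · constructor
    intro a b
    apply Subtype.ext; funext i; apply Subtype.ext
    rw [a.2 i, b.2 i]
  · exact ⟨⟨fun i => 0, fun i => rfl⟩⟩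

lemma card_pi_degreeLT {m : ℕ} (e : Fin (m + 1) → ℕ) :
    Nat.card (Π i, degreeLT F (e i)) = Fintype.card F ^ (∑ i, e i) := by
  rw [Nat.card_pi]
  simp_rw [card_degreeLT]
  exact Finset.prod_pow_eq_pow_sum _ _ _

lemma master {m : ℕ} (e : Fin (m + 1) → ℕ) (he : ∀ i, 1 ≤ e i) :
    Nat.card {p : Π i, degreeLT F (e i) //
        IsUnit (Finset.gcd Finset.univ fun i => ((p i : F[X])))}
      + Fintype.card F ^ ((∑ i, (e i - 1)) + 1) + 1
    = Fintype.card F ^ (∑ i, e i) + Fintype.card F := by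
  classical
  have h1 := card_split (fun p : Π i, degreeLT F (e i) => ∀ i, (p i : F[X]) = 0)
  rw [card_zero_tuple e, card_pi_degreeLT e] at h1
  have h2 := card_split2 (fun p : Π i, degreeLT F (e i) => ¬ ∀ i, (p i : F[X]) = 0)
      (fun p => IsUnit (Finset.gcd Finset.univ fun i => ((p i : F[X]))))
  have hc3 : Nat.card {p : Π i, degreeLT F (e i) //
        (¬ ∀ i, (p i : F[X]) = 0) ∧
          IsUnit (Finset.gcd Finset.univ fun i => ((p i : F[X])))}
      = Nat.card {p : Π i, degreeLT F (e i) //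
          IsUnit (Finset.gcd Finset.univ fun i => ((p i : F[X])))} := by
    apply Nat.card_congr
    apply Equiv.subtypeEquivRight
    intro p
    refine and_iff_right_iff_imp.2 (fun hU hall => ?_)
    rw [Finset.gcd_eq_zero_iff.mpr (fun i _ => hall i)] at hU
    exact not_isUnit_zero hU
  have hc4 : Nat.card {p : Π i, degreeLT F (e i) //
        (¬ ∀ i, (p i : F[X]) = 0) ∧
          ¬ IsUnit (Finset.gcd Finset.univ fun i => ((p i : F[X])))}
      = Nat.card {p : Π i, degreeLT F (e i) //
          (∃ i, (p i : F[X]) ≠ 0) ∧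
            ¬ IsUnit (Finset.gcd Finset.univ fun i => ((p i : F[X])))} := by
    apply Nat.card_congr
    apply Equiv.subtypeEquivRight
    intro p
    simp [not_forall]
  have h5 : Nat.card {p : Π i, degreeLT F (e i) //
        (∃ i, (p i : F[X]) ≠ 0) ∧
          ¬ IsUnit (Finset.gcd Finset.univ fun i => ((p i : F[X])))}
      = Fintype.card F *
        Nat.card {s : Π i, degreeLT F (e i - 1) // ∃ i, (s i : F[X]) ≠ 0} := by
    rw [Nat.card_congr (badEquiv e he), Nat.card_prod, Nat.card_eq_fintype_card]
  have h6 := card_split (fun s : Π i, degreeLT F (e i - 1) => ∀ i, (s i : F[X]) = 0)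
  rw [card_zero_tuple (fun i => e i - 1), card_pi_degreeLT (fun i => e i - 1)] at h6
  have hc7 : Nat.card {s : Π i, degreeLT F (e i - 1) // ¬ ∀ i, (s i : F[X]) = 0}
      = Nat.card {s : Π i, degreeLT F (e i - 1) // ∃ i, (s i : F[X]) ≠ 0} := by
    apply Nat.card_congr
    apply Equiv.subtypeEquivRight
    intro s
    simp [not_forall]
  rw [hc7] at h6
  rw [hc3, hc4, h5] at h2
  have hx : Fintype.card F ^ ((∑ i, (e i - 1)) + 1)
      = Fintype.card F + Fintype.card F *
          Nat.card {s : Π i, degreeLT F (e i - 1) // ∃ i, (s i : F[X]) ≠ 0} := by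
    rw [pow_succ, h6]
    ring
  linarith [h1, h2, hx]

end Count

section Pred

lemma homEval_y_zero {d : ℕ} (u : Fin (d + 1) → F) (x : AlgebraicClosure F) :
    homEval u x 0 = algebraMap F (AlgebraicClosure F) (u (Fin.last d)) * x ^ d := by
  rw [homEval, Finset.sum_eq_single (Fin.last d)]
  · simp [Fin.last]
  · intro j _ hj
    have hj' : (j : ℕ) < d := by
      have h1 := j.isLt
      have h2 : (j : ℕ) ≠ d := fun h => hj (Fin.ext h)
      omega
    rw [zero_pow (by omega : d - (j : ℕ) ≠ 0), mul_zero]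
  · intro h; exact absurd (Finset.mem_univ _) h

lemma homEval_y_ne {d : ℕ} (u : Fin (d + 1) → F) (x y : AlgebraicClosure F) (hy : y ≠ 0) :
    homEval u x y = y ^ d * (aeval (x * y⁻¹) (polyOf u)) := by
  rw [homEval, polyOf, map_sum, Finset.mul_sum]
  apply Finset.sum_congr rfl
  intro j _
  rw [map_mul, aeval_C, map_pow, aeval_X]
  have hle : (j : ℕ) ≤ d := Fin.is_le j
  rw [mul_pow]
  have hkey : y ^ d * (y⁻¹) ^ (j : ℕ) = y ^ (d - (j : ℕ)) := by
    rw [inv_pow, ← (pow_sub_mul_pow y hle :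
      y ^ (d - (j : ℕ)) * y ^ (j : ℕ) = y ^ d), mul_assoc,
      mul_inv_cancel₀ (pow_ne_zero _ hy), mul_one]
  rw [← hkey]
  ring

variable [DecidableEq F]

lemma common_zero_iff {N : ℕ} (d : Fin (N + 1) → ℕ) (u : Π i, Fin (d i + 1) → F) :
    (∃ x y : AlgebraicClosure F, ¬ (x = 0 ∧ y = 0) ∧ ∀ i, homEval (u i) x y = 0)
    ↔ ((∀ i, u i (Fin.last (d i)) = 0) ∨
        ¬ IsUnit (Finset.gcd Finset.univ fun i => polyOf (u i))) := by
  constructor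
  · rintro ⟨x, y, hxy, hz⟩
    by_cases hy : y = 0
    · left
      intro i
      subst hy
      have hx : x ≠ 0 := fun h => hxy ⟨h, rfl⟩
      have h1 := hz i
      rw [homEval_y_zero] at h1
      rcases mul_eq_zero.mp h1 with h | h
      · simpa using h
      · exact absurd h (pow_ne_zero _ hx)
    · right
      have ha : ∀ i, aeval (x * y⁻¹) (polyOf (u i)) = 0 := by
        intro i
        have h1 := hz i
        rw [homEval_y_ne _ _ _ hy] at h1
        rcases mul_eq_zero.mp h1 with h | h
        · exact absurd h (pow_ne_zero _ hy)
        · exact h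
      by_cases hall : ∀ i, polyOf (u i) = 0
      · rw [Finset.gcd_eq_zero_iff.mpr (fun i _ => hall i)]
        exact not_isUnit_zero
      · push_neg at hall
        obtain ⟨i0, hi0⟩ := hall
        have hint : IsIntegral F (x * y⁻¹) :=
          IsAlgebraic.isIntegral ⟨polyOf (u i0), hi0, ha i0⟩
        intro hU
        apply minpoly.not_isUnit F (x * y⁻¹)
        exact isUnit_of_dvd_unit (Finset.dvd_gcd (fun i _ => minpoly.dvd F _ (ha i))) hU
  · intro h
    rcases h with h | h
    · refine ⟨1, 0, fun hc => one_ne_zero hc.1, fun i => ?_⟩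
      rw [homEval_y_zero, h i, map_zero, zero_mul]
    · by_cases hall : ∀ i, polyOf (u i) = 0
      · refine ⟨1, 0, fun hc => one_ne_zero hc.1, fun i => ?_⟩
        rw [homEval_y_zero]
        have h2 : u i (Fin.last (d i)) = 0 := by
          have h3 : (polyOf (u i)).coeff (d i) = (0 : F[X]).coeff (d i) := by
            rw [hall i]
          rw [coeff_polyOf] at h3
          simpa [Fin.last] using h3
        rw [h2, map_zero, zero_mul]
      · push_neg at hall
        obtain ⟨i0, hi0⟩ := hall
        have hgne : (Finset.gcd Finset.univ fun i => polyOf (u i)) ≠ 0 :=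
          fun h0 => hi0 (Finset.gcd_eq_zero_iff.mp h0 i0 (Finset.mem_univ i0))
        have hdeg : (((Finset.gcd Finset.univ fun i => polyOf (u i)).map
            (algebraMap F (AlgebraicClosure F)))).degree ≠ 0 := by
          rw [degree_map, degree_eq_natDegree hgne]
          intro hc
          have h4 : (Finset.gcd Finset.univ fun i => polyOf (u i)).natDegree = 0 := by
            exact_mod_cast hc
          have h5 := gcd_natDegree_pos hgne h
          omega
        obtain ⟨x0, hx0⟩ := IsAlgClosed.exists_root _ hdeg
        refine ⟨x0, 1, fun hc => one_ne_zero hc.2, fun i => ?_⟩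
        rw [homEval_y_ne _ _ _ (one_ne_zero), one_pow, one_mul, inv_one, mul_one]
        obtain ⟨c, hc⟩ := Finset.gcd_dvd (f := fun i => polyOf (u i)) (Finset.mem_univ i)
        rw [hc, map_mul]
        have h6 : aeval x0 (Finset.gcd Finset.univ fun i => polyOf (u i)) = 0 := by
          rw [aeval_def, ← eval_map]; exact hx0
        rw [h6, zero_mul]

end Pred

section Final
variable [Fintype F] [DecidableEq F]

lemma polyOf_snoc {e : ℕ} (v : Fin e → F) :
    polyOf (Fin.snoc v 0 : Fin (e + 1) → F) = polyOf v := by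
  rw [polyOf, polyOf, Fin.sum_univ_castSucc
    (f := fun j : Fin (e + 1) => C ((Fin.snoc v 0 : Fin (e + 1) → F) j) * X ^ (j : ℕ))]
  simp

lemma polyOf_trunc {e : ℕ} (w : Fin (e + 1) → F) (h : w (Fin.last e) = 0) :
    polyOf (fun j : Fin e => w j.castSucc) = polyOf w := by
  have hw : w = Fin.snoc (fun j : Fin e => w j.castSucc) 0 := by
    funext j
    induction j using Fin.lastCases with
    | last => rw [Fin.snoc_last, h]
    | cast i => rw [Fin.snoc_castSucc]
  conv_rhs => rw [hw]
  exact (polyOf_snoc _).symm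

noncomputable def truncEquiv {N : ℕ} (d : Fin (N + 1) → ℕ) :
    {u : Π i, Fin (d i + 1) → F //
      IsUnit (Finset.gcd Finset.univ fun i => polyOf (u i)) ∧
        ∀ i, u i (Fin.last (d i)) = 0}
    ≃ {v : Π i, Fin (d i) → F //
        IsUnit (Finset.gcd Finset.univ fun i => polyOf (v i))} where
  toFun U := ⟨fun i j => U.1 i j.castSucc, by
    have heq : (fun i => polyOf (fun j : Fin (d i) => U.1 i j.castSucc))
        = fun i => polyOf (U.1 i) := funext fun i => polyOf_trunc _ (U.2.2 i)
    rw [heq]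
    exact U.2.1⟩
  invFun V := ⟨fun i => Fin.snoc (V.1 i) 0, by
    have heq : (fun i => polyOf (Fin.snoc (V.1 i) 0 : Fin (d i + 1) → F))
        = fun i => polyOf (V.1 i) := funext fun i => polyOf_snoc _
    refine ⟨by rw [heq]; exact V.2, fun i => by simp⟩⟩
  left_inv U := by
    apply Subtype.ext
    funext i j
    induction j using Fin.lastCases with
    | last =>
      show (Fin.snoc (fun j : Fin (d i) => U.1 i j.castSucc) 0 : Fin (d i + 1) → F)
          (Fin.last (d i)) = U.1 i (Fin.last (d i))
      rw [Fin.snoc_last]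
      exact (U.2.2 i).symm
    | cast jj =>
      show (Fin.snoc (fun j : Fin (d i) => U.1 i j.castSucc) 0 : Fin (d i + 1) → F)
          jj.castSucc = U.1 i jj.castSucc
      rw [Fin.snoc_castSucc]
  right_inv V := by
    apply Subtype.ext
    funext i j
    show (Fin.snoc (V.1 i) 0 : Fin (d i + 1) → F) j.castSucc = V.1 i j
    rw [Fin.snoc_castSucc]

lemma geom_aux (q : ℕ) (hq : 1 ≤ q) (k : ℕ) :
    (q - 1) * (∑ i ∈ Finset.range k, q ^ i) + 1 = q ^ k := by
  induction k with
  | zero => simp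
  | succ k ih =>
    rw [Finset.sum_range_succ, Nat.mul_add]
    have h3 : (q - 1) * q ^ k = q * q ^ k - q ^ k := by rw [Nat.sub_one_mul]
    have h4 : q ^ k ≤ q * q ^ k := Nat.le_mul_of_pos_left _ (by omega)
    have h5 : q ^ (k + 1) = q * q ^ k := by rw [pow_succ, mul_comm]
    omega

theorem main_count {N : ℕ} (d : Fin (N + 1) → ℕ) (hd1 : ∀ i, 1 ≤ d i) :
    Nat.card {u : Π i, Fin (d i + 1) → F //
        ¬ ∃ x y : AlgebraicClosure F, ¬ (x = 0 ∧ y = 0) ∧ ∀ i, homEval (u i) x y = 0}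
      = (Fintype.card F - 1) *
        ((∑ i ∈ Finset.range (N + 1), Fintype.card F ^ i) *
          (Fintype.card F ^ (∑ i, d i) - Fintype.card F ^ ((∑ i, d i) - N))) := by
  classical
  set q := Fintype.card F with hqdef
  have hq : 1 ≤ q := Fintype.card_pos
  have hDge : N + 1 ≤ ∑ i, d i := by
    calc (N + 1 : ℕ) = ∑ _i : Fin (N + 1), 1 := by simp
      _ ≤ ∑ i, d i := Finset.sum_le_sum fun i _ => hd1 i
  have hs1 : (∑ i, (d i + 1 - 1)) + 1 = (∑ i, d i) + 1 := by simp
  have hs2 : (∑ i, (d i + 1)) = (∑ i, d i) + (N + 1) := by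
    rw [Finset.sum_add_distrib]; simp
  have hs3 : (∑ i, (d i - 1)) + (N + 1) = ∑ i, d i := by
    calc (∑ i, (d i - 1)) + (N + 1) = ∑ i : Fin (N + 1), ((d i - 1) + 1) := by
          rw [Finset.sum_add_distrib]; simp
      _ = ∑ i, d i := Finset.sum_congr rfl fun i _ => by
          rw [Nat.sub_add_cancel (hd1 i)]
  have hexp : (∑ i, (d i - 1)) + 1 = (∑ i, d i) - N := by omega
  have hgeo := geom_aux q hq (N + 1)
  have hle : q ^ ((∑ i, d i) - N) ≤ q ^ (∑ i, d i) := Nat.pow_le_pow_right hq (by omega)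
  have hp1 : q ^ ((∑ i, d i) + 1) = q ^ ((∑ i, d i) - N) * q ^ (N + 1) := by
    rw [← pow_add]; congr 1; omega
  have hp2 : q ^ ((∑ i, d i) + (N + 1)) = q ^ (∑ i, d i) * q ^ (N + 1) := by
    rw [← pow_add]
  have hIdent : (q - 1) *
        ((∑ i ∈ Finset.range (N + 1), q ^ i) * (q ^ (∑ i, d i) - q ^ ((∑ i, d i) - N)))
        + q ^ ((∑ i, d i) + 1) + q ^ (∑ i, d i)
        = q ^ ((∑ i, d i) + (N + 1)) + q ^ ((∑ i, d i) - N) := by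
    have hg' : ((q : ℤ) - 1) * (∑ i ∈ Finset.range (N + 1), (q : ℤ) ^ i)
        = (q : ℤ) ^ (N + 1) - 1 := by
      have h := hgeo
      zify [hq] at h
      linarith
    have hp1' : (q : ℤ) ^ ((∑ i, d i) + 1)
        = (q : ℤ) ^ ((∑ i, d i) - N) * (q : ℤ) ^ (N + 1) := by exact_mod_cast hp1
    have hp2' : (q : ℤ) ^ ((∑ i, d i) + (N + 1))
        = (q : ℤ) ^ (∑ i, d i) * (q : ℤ) ^ (N + 1) := by exact_mod_cast hp2
    zify [hle, hq]
    linear_combination ((q : ℤ) ^ (∑ i, d i) - (q : ℤ) ^ ((∑ i, d i) - N)) * hg' + hp1' - hp2'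
  -- step A : rewrite the predicate
  have eA : {u : Π i, Fin (d i + 1) → F //
        ¬ ∃ x y : AlgebraicClosure F, ¬ (x = 0 ∧ y = 0) ∧ ∀ i, homEval (u i) x y = 0}
      ≃ {u : Π i, Fin (d i + 1) → F //
          IsUnit (Finset.gcd Finset.univ fun i => polyOf (u i)) ∧
            ∃ i, u i (Fin.last (d i)) ≠ 0} := by
    apply Equiv.subtypeEquivRight
    intro u
    rw [common_zero_iff d u]
    push_neg
    tauto
  rw [Nat.card_congr eA]
  -- step B : split the coprime count
  have hB := card_split2
    (fun u : Π i, Fin (d i + 1) → F =>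
      IsUnit (Finset.gcd Finset.univ fun i => polyOf (u i)))
    (fun u => ∃ i, u i (Fin.last (d i)) ≠ 0)
  have eC : {u : Π i, Fin (d i + 1) → F //
        IsUnit (Finset.gcd Finset.univ fun i => polyOf (u i)) ∧
          ¬ ∃ i, u i (Fin.last (d i)) ≠ 0}
      ≃ {v : Π i, Fin (d i) → F //
          IsUnit (Finset.gcd Finset.univ fun i => polyOf (v i))} := by
    refine Equiv.trans (Equiv.subtypeEquivRight fun u => ?_) (truncEquiv d)
    push_neg
    tauto
  rw [Nat.card_congr eC] at hB
  have eD : {u : Π i, Fin (d i + 1) → F //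
        IsUnit (Finset.gcd Finset.univ fun i => polyOf (u i))}
      ≃ {p : Π i, degreeLT F (d i + 1) //
          IsUnit (Finset.gcd Finset.univ fun i => ((p i : F[X])))} :=
    Equiv.subtypeEquiv (Equiv.piCongrRight fun i => vecEquiv (d i + 1)) (fun u => Iff.rfl)
  have eE : {v : Π i, Fin (d i) → F //
        IsUnit (Finset.gcd Finset.univ fun i => polyOf (v i))}
      ≃ {p : Π i, degreeLT F (d i) //
          IsUnit (Finset.gcd Finset.univ fun i => ((p i : F[X])))} :=
    Equiv.subtypeEquiv (Equiv.piCongrRight fun i => vecEquiv (d i)) (fun u => Iff.rfl)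
  rw [Nat.card_congr eD, Nat.card_congr eE] at hB
  -- master counts
  have hM1 := master (F := F) (fun i => d i + 1)
    (fun i => Nat.succ_le_succ (Nat.zero_le _))
  have hM2 := master (F := F) d hd1
  rw [hs1, hs2] at hM1
  rw [hexp] at hM2
  linarith [hB, hM1, hM2, hIdent]

end Final
end Stmt12Aux

theorem stmt12 {F : Type*} [Field F] [Fintype F] (N n : ℕ) (hn : 1 ≤ n)
    (lam : Fin (N + 1) → ℕ) (hlam : ∀ i, 0 < lam i)
    (hcop : ∀ i, Nat.Coprime (Fintype.card F) (lam i)) :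
    Nat.card {u : (i : Fin (N + 1)) → (Fin (n * lam i + 1) → F) //
        ¬ ∃ x y : AlgebraicClosure F, ¬ (x = 0 ∧ y = 0) ∧ ∀ i, homEval (u i) x y = 0}
    = Nat.card Fˣ *
      ((∑ i ∈ Finset.range (N + 1), Fintype.card F ^ i) *
        (Fintype.card F ^ ((∑ i, lam i) * n) - Fintype.card F ^ ((∑ i, lam i) * n - N))) := by
  classical
  have h := Stmt12Aux.main_count (F := F) (fun i => n * lam i)
    (fun i => Nat.one_le_iff_ne_zero.mpr (Nat.mul_ne_zero (by omega) (by have := hlam i; omega)))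
  have hsum : (∑ i, n * lam i) = (∑ i, lam i) * n := by
    rw [← Finset.mul_sum, mul_comm]
  rw [hsum] at h
  rw [h, Nat.card_eq_fintype_card, Fintype.card_units]
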